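/- Let R be a commutative ring and let A = [[a,b],[c,d]] be a unimodular 2×2 matrix over R. The following are equivalent: (1) A is equivalent to the diagonal matrix Diag(1, det A), i.e., there exist invertible 2×2 matrices M, N over R with MAN = Diag(1, det A); (2) A is simply extendable; (3) there exist e, f ∈ R such that the pair (ae+cf, be+df) is unimodular; (4) there exist x, y, z, w ∈ R such that ax+by+cz+dw = 1 and the matrix [[x,y],[z,w]] is non-full. -/

import Mathlib

open Matrix

/-- A `2 × 2` matrix is unimodular if its four entries generate the unit ideal. -/
def Unimodular2 {R : Type*} [CommRing R] (A : Matrix (Fin 2) (Fin 2) R) : Prop :=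
  Ideal.span {A 0 0, A 0 1, A 1 0, A 1 1} = ⊤

/-- A `2 × 2` matrix is extendable if it is the top-left block of a `3 × 3` matrix
of determinant `1`. -/
def Extendable {R : Type*} [CommRing R] (A : Matrix (Fin 2) (Fin 2) R) : Prop :=
  ∃ B : Matrix (Fin 3) (Fin 3) R, B.det = 1 ∧
    ∀ i j : Fin 2, B i.castSucc j.castSucc = A i j

/-- A `2 × 2` matrix is simply extendable if it is the top-left block of a `3 × 3` matrix
of determinant `1` whose `(3,3)` entry is `0`. -/
def SimplyExtendable {R : Type*} [CommRing R] (A : Matrix (Fin 2) (Fin 2) R) : Prop :=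
  ∃ B : Matrix (Fin 3) (Fin 3) R, B.det = 1 ∧
    (∀ i j : Fin 2, B i.castSucc j.castSucc = A i j) ∧ B 2 2 = 0

/-- A `2 × 2` matrix is non-full if it is the product of a `2 × 1` and a `1 × 2` matrix. -/
def NonFull {R : Type*} [CommRing R] (A : Matrix (Fin 2) (Fin 2) R) : Prop :=
  ∃ l m o q : R, A = !![l * o, l * q; m * o, m * q]

theorem stmt10 (R : Type*) [CommRing R] (a b c d : R)
    (hA : Unimodular2 !![a, b; c, d]) :
    [(∃ M N : Matrix (Fin 2) (Fin 2) R, IsUnit M.det ∧ IsUnit N.det ∧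
        M * !![a, b; c, d] * N = !![1, 0; 0, (!![a, b; c, d] : Matrix (Fin 2) (Fin 2) R).det]),
     SimplyExtendable !![a, b; c, d],
     (∃ e f : R, Ideal.span {a * e + c * f, b * e + d * f} = ⊤),
     (∃ x y z w : R, a * x + b * y + c * z + d * w = 1 ∧ NonFull !![x, y; z, w])].TFAE := by
  tfae_have 1 → 3 := by
    rintro ⟨M, N, hM, hN, hMN⟩
    refine ⟨M 0 0, M 0 1, ?_⟩
    rw [Ideal.eq_top_iff_one, Ideal.mem_span_pair]
    have hN1 : N * N⁻¹ = 1 := mul_nonsing_inv N hN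
    have hN2 : N⁻¹ * N = 1 := nonsing_inv_mul N hN
    have hMA : M * !![a, b; c, d] =
        !![1, 0; 0, (!![a, b; c, d] : Matrix (Fin 2) (Fin 2) R).det] * N⁻¹ := by
      calc M * !![a, b; c, d] = M * !![a, b; c, d] * (N * N⁻¹) := by rw [hN1, mul_one]
        _ = M * !![a, b; c, d] * N * N⁻¹ := (mul_assoc _ N N⁻¹).symm
        _ = _ := by rw [hMN]
    have h00 := congrFun (congrFun hMA 0) 0
    have h01 := congrFun (congrFun hMA 0) 1
    simp [Matrix.mul_apply, Fin.sum_univ_two] at h00 h01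
    have hinv := congrFun (congrFun hN2 0) 0
    simp [Matrix.mul_apply, Fin.sum_univ_two] at hinv
    exact ⟨N 0 0, N 1 0, by
      rw [show a * M 0 0 + c * M 0 1 = M 0 0 * a + M 0 1 * c by ring, h00,
        show b * M 0 0 + d * M 0 1 = M 0 0 * b + M 0 1 * d by ring, h01]
      rw [mul_comm (N 0 0), mul_comm (N 1 0)]
      exact hinv⟩
  tfae_have 3 → 1 := by
    rintro ⟨e, f, hef⟩
    rw [Ideal.eq_top_iff_one, Ideal.mem_span_pair] at hef
    obtain ⟨g, h, hgh⟩ := hef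
    refine ⟨!![e, f; -(c*g+d*h), a*g+b*h], !![g, -(b*e+d*f); h, a*e+c*f], ?_, ?_, ?_⟩
    · rw [Matrix.det_fin_two_of]
      exact IsUnit.of_mul_eq_one 1 (by linear_combination hgh)
    · rw [Matrix.det_fin_two_of]
      exact IsUnit.of_mul_eq_one 1 (by linear_combination hgh)
    · ext i j
      fin_cases i <;> fin_cases j <;>
        simp [Matrix.mul_apply, Fin.sum_univ_two, Matrix.det_fin_two_of] <;>
        first
          | ring1
          | linear_combination hgh
          | linear_combination (a*d - b*c) * hgh
  tfae_have 3 → 2 := by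
    rintro ⟨e, f, hef⟩
    rw [Ideal.eq_top_iff_one, Ideal.mem_span_pair] at hef
    obtain ⟨g, h, hgh⟩ := hef
    refine ⟨!![a, b, f; c, d, -e; -h, g, 0], ?_, ?_, ?_⟩
    · rw [Matrix.det_fin_three]
      simp
      linear_combination hgh
    · intro i j
      fin_cases i <;> fin_cases j <;> simp
    · simp
  tfae_have 2 → 3 := by
    rintro ⟨B, hdet, htl, h22⟩
    have h00 := htl 0 0
    have h01 := htl 0 1
    have h10 := htl 1 0
    have h11 := htl 1 1
    simp [show (Fin.castSucc (0 : Fin 2)) = (0 : Fin 3) from rfl,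
      show (Fin.castSucc (1 : Fin 2)) = (1 : Fin 3) from rfl] at h00 h01 h10 h11
    rw [Matrix.det_fin_three, h00, h01, h10, h11, h22] at hdet
    refine ⟨B 1 2, -(B 0 2), ?_⟩
    rw [Ideal.eq_top_iff_one, Ideal.mem_span_pair]
    exact ⟨-(B 2 1), B 2 0, by linear_combination hdet⟩
  tfae_have 3 → 4 := by
    rintro ⟨e, f, hef⟩
    rw [Ideal.eq_top_iff_one, Ideal.mem_span_pair] at hef
    obtain ⟨g, h, hgh⟩ := hef
    exact ⟨e * g, e * h, f * g, f * h, by linear_combination hgh,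
      e, f, g, h, rfl⟩
  tfae_have 4 → 3 := by
    rintro ⟨x, y, z, w, hsum, l, m, o, q, hnf⟩
    have h00 := congrFun (congrFun hnf 0) 0
    have h01 := congrFun (congrFun hnf 0) 1
    have h10 := congrFun (congrFun hnf 1) 0
    have h11 := congrFun (congrFun hnf 1) 1
    simp at h00 h01 h10 h11
    refine ⟨l, m, ?_⟩
    rw [Ideal.eq_top_iff_one, Ideal.mem_span_pair]
    exact ⟨o, q, by linear_combination hsum - a*h00 - b*h01 - c*h10 - d*h11⟩
  tfae_finish
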